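/- Let X, Y be Polish spaces and c : X × Y → ℝ. A set Γ ⊆ X × Y is c-cyclically monotone if and only if for every finite measure α concentrated on finitely many points of Γ, one has ∫ c dα ≤ ∫ c dα′ for every finite measure α′ concentrated on finitely many points of X × Y that has the same total mass and the same two marginals as α. -/

import Mathlib

set_option linter.unusedSectionVars false
set_option maxHeartbeats 1000000


open MeasureTheory

/-- A set `Γ ⊆ X × Y` is `c`-cyclically monotone if for all finite families
`(x₁,y₁),…,(x_l,y_l) ∈ Γ` one has `Σ c(xᵢ,yᵢ) ≤ Σ c(xᵢ,y_{i+1})` (indices cyclic). -/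
def CCyclicallyMonotone {X Y : Type*} (c : X × Y → ℝ) (Γ : Set (X × Y)) : Prop :=
  ∀ (l : ℕ) (pts : Fin (l + 1) → X × Y), (∀ i, pts i ∈ Γ) →
    ∑ i, c (pts i) ≤ ∑ i, c ((pts i).1, (pts (i + 1)).2)

namespace CCMaux

variable {X Y : Type*} (c : X × Y → ℝ)

/-- Sum of shifted costs along a chain: `c(x,y₁)+c(x₁,y₂)+⋯+c(x_{m-1},y_m)`. -/
def bsum : List (X × Y) → X → ℝ
  | [], _ => 0
  | p :: l, x => c (x, p.2) + bsum l p.1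

/-- Cost improvement of a chain. -/
def chainCost : List (X × Y) → X → ℝ
  | [], _ => 0
  | p :: l, x => c (x, p.2) - c p + chainCost l p.1

/-- Final first-coordinate of a chain. -/
def chainEnd : List (X × Y) → X → X
  | [], x => x
  | p :: l, _ => chainEnd l p.1

lemma chainCost_eq (l : List (X × Y)) (x : X) :
    chainCost c l x = bsum c l x - (l.map c).sum := by
  induction l generalizing x with
  | nil => simp [chainCost, bsum]
  | cons p t ih =>
    show c (x, p.2) - c p + chainCost c t p.1 = c (x, p.2) + bsum c t p.1 - (c p + (t.map c).sum)
    rw [ih p.1]; ring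

lemma sum_map_eq_finsum {α β : Type*} [AddCommMonoid β] (f : α → β) (l : List α) :
    (l.map f).sum = ∑ i : Fin l.length, f (l.get i) := by
  induction l with
  | nil => simp
  | cons a t ih =>
    rw [List.map_cons, List.sum_cons, ih]
    show _ = ∑ i : Fin (t.length + 1), f ((a :: t).get i)
    rw [Fin.sum_univ_succ]
    rfl

lemma consec_sum (l : List (X × Y)) (p : X × Y) :
    (∑ i : Fin l.length,
      c (((p :: l).get i.castSucc).1, ((p :: l).get i.succ).2)) = bsum c l p.1 := by
  induction l generalizing p with
  | nil => simp [bsum]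
  | cons q t ih =>
    show (∑ i : Fin (t.length + 1), _) = _
    rw [Fin.sum_univ_succ]
    have h0 : ((p :: q :: t).get (0 : Fin (t.length + 1)).castSucc) = p := rfl
    have h1 : ((p :: q :: t).get (0 : Fin (t.length + 1)).succ) = q := rfl
    rw [h0, h1]
    have : ∀ i : Fin t.length,
        c (((p :: q :: t).get i.succ.castSucc).1, ((p :: q :: t).get i.succ.succ).2)
          = c (((q :: t).get i.castSucc).1, ((q :: t).get i.succ).2) := by
      intro i
      have e1 : ((p :: q :: t).get i.succ.castSucc) = ((q :: t).get i.castSucc) := by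
        rw [← Fin.succ_castSucc]; rfl
      have e2 : ((p :: q :: t).get i.succ.succ) = ((q :: t).get i.succ) := rfl
      rw [e1, e2]
    rw [Finset.sum_congr rfl (fun i _ => this i), ih q]
    simp [bsum]

lemma chainEnd_eq_get (l : List (X × Y)) (p : X × Y) :
    chainEnd l p.1 = ((p :: l).get (Fin.last l.length)).1 := by
  induction l generalizing p with
  | nil => rfl
  | cons q t ih =>
    show chainEnd t q.1 = ((p :: q :: t).get (Fin.last (t.length + 1))).1
    rw [ih q, ← Fin.succ_last]
    rfl

lemma sum_le_bsum {Γ : Set (X × Y)} (h : CCyclicallyMonotone c Γ)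
    (p : X × Y) (l : List (X × Y)) (hmem : ∀ q ∈ p :: l, q ∈ Γ) :
    ((p :: l).map c).sum ≤ bsum c (p :: l) (chainEnd l p.1) := by
  set n := l.length with hn
  have hlen : (p :: l).length = n + 1 := rfl
  set pts : Fin (n + 1) → X × Y := fun i => (p :: l).get (Fin.cast hlen.symm i) with hpts
  have hΓ : ∀ i, pts i ∈ Γ := fun i => hmem _ (List.get_mem _ _)
  have key := h n pts hΓ
  have ha : ∑ i, c (pts i) = ((p :: l).map c).sum := by
    rw [sum_map_eq_finsum]
    exact Fintype.sum_equiv (finCongr hlen.symm) _ _ (fun i => rfl)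
  have hb : ∑ i, c ((pts i).1, (pts (i + 1)).2) = bsum c (p :: l) (chainEnd l p.1) := by
    rw [Fin.sum_univ_castSucc]
    have hlast : pts (Fin.last n) = (p :: l).get (Fin.last l.length) := rfl
    have hlast1 : pts (Fin.last n + 1) = p := by
      have : (Fin.last n + 1 : Fin (n + 1)) = 0 := by
        simp
      rw [this]; rfl
    have hcs : ∀ i : Fin n, (i.castSucc + 1 : Fin (n + 1)) = i.succ := by
      intro i
      apply Fin.ext
      rw [Fin.val_add_one, if_neg (Fin.castSucc_lt_last i).ne]
      simp
    have hmain : ∑ i : Fin n, c ((pts i.castSucc).1, (pts (i.castSucc + 1)).2)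
        = bsum c l p.1 := by
      rw [← consec_sum c l p]
      exact Finset.sum_congr rfl (fun i _ => by rw [hcs i]; rfl)
    rw [hmain, hlast, hlast1, ← chainEnd_eq_get]
    show bsum c l p.1 + c (chainEnd l p.1, p.2) = bsum c (p :: l) (chainEnd l p.1)
    simp [bsum]; ring
  rw [ha, hb] at key
  exact key

lemma chainCost_cycle_nonneg {Γ : Set (X × Y)} (h : CCyclicallyMonotone c Γ)
    (p : X × Y) (l : List (X × Y)) (hmem : ∀ q ∈ p :: l, q ∈ Γ) :
    0 ≤ chainCost c (p :: l) (chainEnd l p.1) := by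
  rw [chainCost_eq]
  have := sum_le_bsum c h p l hmem
  linarith





variable (S : Finset (X × Y)) [DecidableEq X]

def Vset (x : X) : Set ℝ :=
  {r | ∃ l : List (X × Y), (∀ p ∈ l, p ∈ S) ∧ chainCost c l x = r}

lemma Vset_nonempty (x : X) : (Vset c S x).Nonempty :=
  ⟨0, [], by simp, rfl⟩

lemma chainEnd_mem (t : List (X × Y)) (x : X) (ht : ∀ p ∈ t, p ∈ S) :
    chainEnd t x = x ∨ ∃ q ∈ S, chainEnd t x = q.1 := by
  induction t generalizing x with
  | nil => exact Or.inl rfl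
  | cons q t ih =>
    right
    rcases ih q.1 (fun p hp => ht p (List.mem_cons_of_mem _ hp)) with h | ⟨q', hq', h⟩
    · exact ⟨q, ht q List.mem_cons_self, h⟩
    · exact ⟨q', hq', h⟩

variable {Γ : Set (X × Y)}

lemma Vset_bddBelow (hmono : CCyclicallyMonotone c Γ) (hS : ↑S ⊆ Γ) (hSne : S.Nonempty)
    (x : X) : BddBelow (Vset c S x) := by
  classical
  refine ⟨min 0 ((S ×ˢ S).inf' (hSne.product hSne)
      fun qq => c (x, qq.1.2) - c (qq.2.1, qq.1.2)), fun r hr => ?_⟩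
  obtain ⟨l, hl, rfl⟩ := hr
  cases l with
  | nil => exact min_le_left _ _
  | cons p t =>
    have hp : p ∈ S := hl p List.mem_cons_self
    have hcyc := chainCost_cycle_nonneg c hmono p t (fun q hq => hS (hl q hq))
    have hend : ∃ q' ∈ S, chainEnd t p.1 = q'.1 := by
      rcases chainEnd_mem S t p.1 (fun q hq => hl q (List.mem_cons_of_mem _ hq)) with h | h
      · exact ⟨p, hp, h⟩
      · exact h
    obtain ⟨q', hq', hq'e⟩ := hend
    have e1 : chainCost c (p :: t) x = c (x, p.2) - c p + chainCost c t p.1 := rfl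
    have e2 : chainCost c (p :: t) (chainEnd t p.1)
        = c (chainEnd t p.1, p.2) - c p + chainCost c t p.1 := rfl
    have hinf : (S ×ˢ S).inf' (hSne.product hSne)
        (fun qq => c (x, qq.1.2) - c (qq.2.1, qq.1.2)) ≤ c (x, p.2) - c (q'.1, p.2) :=
      Finset.inf'_le _ (Finset.mem_product.mpr ⟨hp, hq'⟩ : (p, q') ∈ S ×ˢ S)
    rw [e2, hq'e] at hcyc
    rw [e1]
    refine le_trans (min_le_right _ _) ?_
    linarith

noncomputable def phi (x : X) : ℝ := sInf (Vset c S x)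

lemma phi_le_of_mem (hmono : CCyclicallyMonotone c Γ) (hS : ↑S ⊆ Γ) (hSne : S.Nonempty)
    {p : X × Y} (hp : p ∈ S) (x' : X) :
    phi c S x' ≤ c (x', p.2) - c p + phi c S p.1 := by
  have h1 : phi c S x' - (c (x', p.2) - c p) ≤ sInf (Vset c S p.1) := by
    apply le_csInf (Vset_nonempty c S p.1)
    rintro r ⟨l, hl, rfl⟩
    have hmem : (c (x', p.2) - c p + chainCost c l p.1) ∈ Vset c S x' := by
      refine ⟨p :: l, ?_, rfl⟩
      intro q hq
      rcases List.mem_cons.mp hq with h | h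
      · exact h ▸ hp
      · exact hl q h
    have := csInf_le (Vset_bddBelow c S hmono hS hSne x') hmem
    have hphi : phi c S x' ≤ c (x', p.2) - c p + chainCost c l p.1 := this
    linarith
  have : phi c S p.1 = sInf (Vset c S p.1) := rfl
  linarith

noncomputable def psi (hSne : S.Nonempty) (y : Y) : ℝ :=
  (S.image Prod.fst).inf' (hSne.image _) fun x => c (x, y) - phi c S x

lemma phi_add_psi_le (hSne : S.Nonempty) {x : X} (hx : x ∈ S.image Prod.fst) (y : Y) :
    phi c S x + psi c S hSne y ≤ c (x, y) := by
  have := Finset.inf'_le (fun x => c (x, y) - phi c S x) hx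
  have h : psi c S hSne y ≤ c (x, y) - phi c S x := this
  linarith

lemma phi_add_psi_eq (hmono : CCyclicallyMonotone c Γ) (hS : ↑S ⊆ Γ) (hSne : S.Nonempty)
    {p : X × Y} (hp : p ∈ S) :
    phi c S p.1 + psi c S hSne p.2 = c p := by
  refine le_antisymm (phi_add_psi_le c S hSne (Finset.mem_image_of_mem _ hp) p.2) ?_
  have h : c p - phi c S p.1 ≤ psi c S hSne p.2 := by
    apply Finset.le_inf'
    intro b hb
    obtain ⟨q, hq, rfl⟩ := Finset.mem_image.mp hb
    have := phi_le_of_mem c S hmono hS hSne hp q.1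
    linarith
  linarith

end CCMaux


lemma integrable_of_concentrated {Z : Type*} [MeasurableSpace Z] [MeasurableSingletonClass Z]
    (μ : Measure Z) [IsFiniteMeasure μ] (F : Finset Z) (hF : μ (↑F : Set Z)ᶜ = 0)
    (f : Z → ℝ) : Integrable f μ := by
  classical
  set f' : Z → ℝ := fun z => ∑ z₀ ∈ F, if z = z₀ then f z₀ else 0 with hf'
  have hmeas : Measurable f' := by
    apply Finset.measurable_sum
    intro z₀ _
    exact Measurable.ite measurableSet_eq measurable_const measurable_const
  have hsub : {z | f z ≠ f' z} ⊆ (↑F : Set Z)ᶜ := by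
    intro z hz hzF
    apply hz
    simp [hf', Finset.sum_ite_eq, Finset.mem_coe.mp hzF]
  have hae : f =ᵐ[μ] f' := by
    rw [Filter.EventuallyEq, ae_iff]
    exact measure_mono_null hsub hF
  have hint : Integrable f' μ := by
    apply integrable_finset_sum
    intro z₀ _
    have he : (fun z => if z = z₀ then f z₀ else 0) = Set.indicator {z₀} (fun _ => f z₀) := by
      funext z; by_cases h : z = z₀ <;> simp [h]
    rw [he]
    exact (integrable_const _).indicator (measurableSet_singleton z₀)
  exact hint.congr hae.symm


/-- **Lemma.** A set `Γ ⊆ X × Y` is `c`-cyclically monotone if and only if for every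
finite measure `α` concentrated on finitely many points of `Γ`, every finite measure `α'`
concentrated on finitely many points which has the same total mass and the same two
marginals as `α` satisfies `∫ c dα ≤ ∫ c dα'`. -/
theorem statement12
    {X Y : Type*}
    [TopologicalSpace X] [PolishSpace X] [MeasurableSpace X] [BorelSpace X]
    [TopologicalSpace Y] [PolishSpace Y] [MeasurableSpace Y] [BorelSpace Y]
    (c : X × Y → ℝ) (Γ : Set (X × Y)) :
    CCyclicallyMonotone c Γ ↔
      ∀ α α' : Measure (X × Y), IsFiniteMeasure α → IsFiniteMeasure α' →
        (∃ S : Finset (X × Y), ↑S ⊆ Γ ∧ α (↑S : Set (X × Y))ᶜ = 0) →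
        (∃ S : Finset (X × Y), α' (↑S : Set (X × Y))ᶜ = 0) →
        α' Set.univ = α Set.univ →
        α'.map Prod.fst = α.map Prod.fst →
        α'.map Prod.snd = α.map Prod.snd →
        ∫ p, c p ∂α ≤ ∫ p, c p ∂α' := by
  constructor
  · rintro hmono α α' hα hα' ⟨S, hSΓ, hSnull⟩ ⟨S', hS'null⟩ hmass hfst hsnd
    classical
    haveI := hα; haveI := hα'
    rcases S.eq_empty_or_nonempty with rfl | hSne
    · have h0 : α = 0 := Measure.measure_univ_eq_zero.mp (by simpa using hSnull)
      have h0' : α' = 0 := Measure.measure_univ_eq_zero.mp (by rw [hmass]; simpa using hSnull)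
      simp [h0, h0']
    set X₀ : Finset X := S.image Prod.fst with hX₀
    set Y₀ : Finset Y := S.image Prod.snd with hY₀
    set φ : X → ℝ := CCMaux.phi c S with hφdef
    set ψ : Y → ℝ := CCMaux.psi c S hSne with hψdef
    set φ' : X → ℝ := fun x => ∑ x₀ ∈ X₀, if x = x₀ then φ x₀ else 0 with hφ'
    set ψ' : Y → ℝ := fun y => ∑ y₀ ∈ Y₀, if y = y₀ then ψ y₀ else 0 with hψ'
    have hφ'eq : ∀ x ∈ X₀, φ' x = φ x := by
      intro x hx; simp [hφ', Finset.sum_ite_eq, hx]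
    have hψ'eq : ∀ y ∈ Y₀, ψ' y = ψ y := by
      intro y hy; simp [hψ', Finset.sum_ite_eq, hy]
    have hφ'm : Measurable φ' :=
      Finset.measurable_sum _ fun x₀ _ =>
        Measurable.ite measurableSet_eq measurable_const measurable_const
    have hψ'm : Measurable ψ' :=
      Finset.measurable_sum _ fun y₀ _ =>
        Measurable.ite measurableSet_eq measurable_const measurable_const
    set g : X × Y → ℝ := fun p => φ' p.1 + ψ' p.2 with hg
    set T : Finset (X × Y) := X₀ ×ˢ Y₀ with hT
    have hfst_null : α' (Prod.fst ⁻¹' ((↑X₀ : Set X)ᶜ)) = 0 := by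
      have hXm : MeasurableSet ((↑X₀ : Set X)ᶜ) := X₀.finite_toSet.measurableSet.compl
      have h1 : α' (Prod.fst ⁻¹' ((↑X₀ : Set X)ᶜ)) = α (Prod.fst ⁻¹' ((↑X₀ : Set X)ᶜ)) := by
        rw [← Measure.map_apply measurable_fst hXm, ← Measure.map_apply measurable_fst hXm,
          hfst]
      rw [h1]
      refine measure_mono_null ?_ hSnull
      intro p hp hpS
      exact hp (Finset.mem_coe.mpr (Finset.mem_image_of_mem _ (Finset.mem_coe.mp hpS)))
    have hsnd_null : α' (Prod.snd ⁻¹' ((↑Y₀ : Set Y)ᶜ)) = 0 := by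
      have hYm : MeasurableSet ((↑Y₀ : Set Y)ᶜ) := Y₀.finite_toSet.measurableSet.compl
      have h1 : α' (Prod.snd ⁻¹' ((↑Y₀ : Set Y)ᶜ)) = α (Prod.snd ⁻¹' ((↑Y₀ : Set Y)ᶜ)) := by
        rw [← Measure.map_apply measurable_snd hYm, ← Measure.map_apply measurable_snd hYm,
          hsnd]
      rw [h1]
      refine measure_mono_null ?_ hSnull
      intro p hp hpS
      exact hp (Finset.mem_coe.mpr (Finset.mem_image_of_mem _ (Finset.mem_coe.mp hpS)))
    have hTnull : α' ((↑T : Set (X × Y))ᶜ) = 0 := by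
      refine measure_mono_null ?_ (measure_union_null hfst_null hsnd_null)
      intro p hp
      simp only [Set.mem_compl_iff, Finset.mem_coe, hT, Finset.mem_product, not_and_or] at hp
      simp only [Set.mem_union, Set.mem_preimage, Set.mem_compl_iff, Finset.mem_coe]
      exact hp
    have hceq : ∀ p ∈ S, c p = g p := by
      intro p hp
      have h1 : φ' p.1 = φ p.1 := hφ'eq _ (Finset.mem_image_of_mem _ hp)
      have h2 : ψ' p.2 = ψ p.2 := hψ'eq _ (Finset.mem_image_of_mem _ hp)
      have h3 := CCMaux.phi_add_psi_eq c S hmono hSΓ hSne hp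
      simp only [hg, h1, h2, hφdef, hψdef]
      linarith
    have hae_α : (fun p => c p) =ᵐ[α] g := by
      rw [Filter.EventuallyEq, ae_iff]
      refine measure_mono_null ?_ hSnull
      intro p hp hpS
      exact hp (hceq p (Finset.mem_coe.mp hpS))
    have hae_le : ∀ᵐ p ∂α', g p ≤ c p := by
      rw [ae_iff]
      refine measure_mono_null ?_ hTnull
      intro p hp hpT
      apply hp
      have hpT' := Finset.mem_product.mp (Finset.mem_coe.mp hpT)
      have h1 : φ' p.1 = φ p.1 := hφ'eq _ hpT'.1
      have h2 : ψ' p.2 = ψ p.2 := hψ'eq _ hpT'.2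
      have h3 := CCMaux.phi_add_psi_le c S hSne (hX₀ ▸ hpT'.1) p.2
      simp only [hg, h1, h2, hφdef, hψdef]
      linarith
    have Ic : Integrable c α := integrable_of_concentrated α S hSnull c
    have Ic' : Integrable c α' := integrable_of_concentrated α' S' hS'null c
    have Ig' : Integrable g α' := integrable_of_concentrated α' T hTnull g
    have Iφα : Integrable (fun p : X × Y => φ' p.1) α := integrable_of_concentrated α S hSnull _
    have Iψα : Integrable (fun p : X × Y => ψ' p.2) α := integrable_of_concentrated α S hSnull _
    have Iφα' : Integrable (fun p : X × Y => φ' p.1) α' :=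
      integrable_of_concentrated α' T hTnull _
    have Iψα' : Integrable (fun p : X × Y => ψ' p.2) α' :=
      integrable_of_concentrated α' T hTnull _
    have hmapφ : ∫ p : X × Y, φ' p.1 ∂α = ∫ p : X × Y, φ' p.1 ∂α' := by
      have e1 : ∫ p : X × Y, φ' p.1 ∂α = ∫ x, φ' x ∂(α.map Prod.fst) :=
        (integral_map measurable_fst.aemeasurable hφ'm.aestronglyMeasurable).symm
      have e2 : ∫ p : X × Y, φ' p.1 ∂α' = ∫ x, φ' x ∂(α'.map Prod.fst) :=
        (integral_map measurable_fst.aemeasurable hφ'm.aestronglyMeasurable).symm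
      rw [e1, e2, hfst]
    have hmapψ : ∫ p : X × Y, ψ' p.2 ∂α = ∫ p : X × Y, ψ' p.2 ∂α' := by
      have e1 : ∫ p : X × Y, ψ' p.2 ∂α = ∫ y, ψ' y ∂(α.map Prod.snd) :=
        (integral_map measurable_snd.aemeasurable hψ'm.aestronglyMeasurable).symm
      have e2 : ∫ p : X × Y, ψ' p.2 ∂α' = ∫ y, ψ' y ∂(α'.map Prod.snd) :=
        (integral_map measurable_snd.aemeasurable hψ'm.aestronglyMeasurable).symm
      rw [e1, e2, hsnd]
    have hgg : ∫ p, g p ∂α = ∫ p, g p ∂α' := by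
      rw [show (fun p : X × Y => g p) = fun p : X × Y => φ' p.1 + ψ' p.2 from rfl]
      rw [integral_add Iφα Iψα, integral_add Iφα' Iψα', hmapφ, hmapψ]
    calc ∫ p, c p ∂α = ∫ p, g p ∂α := integral_congr_ae hae_α
      _ = ∫ p, g p ∂α' := hgg
      _ ≤ ∫ p, c p ∂α' := integral_mono_ae Ig' Ic' hae_le
  · intro h l pts hpts
    classical
    set qts : Fin (l + 1) → X × Y := fun i => ((pts i).1, (pts (i + 1)).2) with hqts
    set α : Measure (X × Y) := ∑ i : Fin (l + 1), Measure.dirac (pts i) with hαdef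
    set α' : Measure (X × Y) := ∑ i : Fin (l + 1), Measure.dirac (qts i) with hα'def
    have happly : ∀ (f : Fin (l + 1) → X × Y) (s : Set (X × Y)),
        (∑ i : Fin (l + 1), Measure.dirac (f i)) s = ∑ i : Fin (l + 1), s.indicator 1 (f i) := by
      intro f s
      rw [Measure.finset_sum_apply]
      exact Finset.sum_congr rfl fun i _ => Measure.dirac_apply _ s
    have hfinα : IsFiniteMeasure α := by
      constructor
      rw [hαdef, happly]
      simp
    have hfinα' : IsFiniteMeasure α' := by
      constructor
      rw [hα'def, happly]
      simp
    have hmass : α' Set.univ = α Set.univ := by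
      rw [hαdef, hα'def, happly, happly]
      simp
    have hfst : α'.map Prod.fst = α.map Prod.fst := by
      ext A hA
      rw [Measure.map_apply measurable_fst hA, Measure.map_apply measurable_fst hA,
        hαdef, hα'def, happly, happly]
      refine Finset.sum_congr rfl fun i _ => ?_
      simp [Set.indicator_apply, hqts]
    have hsnd : α'.map Prod.snd = α.map Prod.snd := by
      ext A hA
      rw [Measure.map_apply measurable_snd hA, Measure.map_apply measurable_snd hA,
        hαdef, hα'def, happly, happly]
      refine Fintype.sum_equiv (Equiv.addRight (1 : Fin (l + 1))) _ _ fun i => ?_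
      simp [Set.indicator_apply, hqts]
    have hconcα : ∃ Sf : Finset (X × Y), ↑Sf ⊆ Γ ∧ α ((↑Sf : Set (X × Y))ᶜ) = 0 := by
      refine ⟨Finset.image pts Finset.univ, ?_, ?_⟩
      · intro p hp
        obtain ⟨i, _, rfl⟩ := Finset.mem_image.mp (Finset.mem_coe.mp hp)
        exact hpts i
      · rw [hαdef, happly]
        apply Finset.sum_eq_zero
        intro i _
        simp [Set.indicator_apply]
    have hconcα' : ∃ Sf : Finset (X × Y), α' ((↑Sf : Set (X × Y))ᶜ) = 0 := by
      refine ⟨Finset.image qts Finset.univ, ?_⟩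
      rw [hα'def, happly]
      apply Finset.sum_eq_zero
      intro i _
      simp [Set.indicator_apply]
    have hdint : ∀ p : X × Y, Integrable c (Measure.dirac p) := by
      intro p
      refine integrable_of_concentrated _ {p} ?_ c
      rw [Measure.dirac_apply]
      simp [Set.indicator_apply]
    have hIα : ∫ p, c p ∂α = ∑ i : Fin (l + 1), c (pts i) := by
      rw [hαdef, integral_finset_sum_measure fun i _ => hdint (pts i)]
      exact Finset.sum_congr rfl fun i _ => integral_dirac c (pts i)
    have hIα' : ∫ p, c p ∂α' = ∑ i : Fin (l + 1), c (qts i) := by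
      rw [hα'def, integral_finset_sum_measure fun i _ => hdint (qts i)]
      exact Finset.sum_congr rfl fun i _ => integral_dirac c (qts i)
    have := h α α' hfinα hfinα' hconcα hconcα' hmass hfst hsnd
    rw [hIα, hIα'] at this
    exact this
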